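/- For z = c + iγ with c > 0 and γ ∈ ℝ, and for a nonnegative bounded self-adjoint operator N on a Hilbert space, the operator 1 + z²N has a bounded inverse and ‖(1+z²N)^{−1}‖ ≤ 1 if |γ| ≤ c, and ‖(1+z²N)^{−1}‖ ≤ |z|²/(2c|γ|) if |γ| > c. -/

import Mathlib

open ContinuousLinearMap Complex

lemma keyineq (c γ u t : ℝ) (hγc : |γ| ≤ c) (hu : 0 ≤ u) (ht : 0 ≤ t) :
    (1*u)^2 ≤ (u + (c^2-γ^2)*t)^2 + (2*c*γ*t)^2 := by
  have h : γ^2 ≤ c^2 := by nlinarith [_root_.sq_abs γ, abs_nonneg γ]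
  nlinarith [sq_nonneg (2*c*γ*t), mul_nonneg (mul_nonneg hu (sub_nonneg.2 h)) ht]

lemma keyineq2 (c γ u t : ℝ) (hc : 0 < c) (hγc : c < |γ|) (hu : 0 ≤ u) (ht : 0 ≤ t) :
    (2*c*|γ|/(c^2+γ^2)*u)^2 ≤ (u + (c^2-γ^2)*t)^2 + (2*c*γ*t)^2 := by
  have hq : (0:ℝ) < c^2+γ^2 := by positivity
  rw [mul_comm _ u, ← mul_div_assoc, div_pow, div_le_iff₀ (by positivity)]
  have h2 : (u*(2*c*|γ|))^2 = 4*(c^2*(γ^2*u^2)) := by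
    have h1 : |γ|^2 = γ^2 := _root_.sq_abs γ
    rw [mul_pow, mul_pow, mul_pow, h1]; ring
  rw [h2]
  nlinarith [sq_nonneg ((c^2+γ^2)^2*t - (γ^2-c^2)*u)]

lemma coercive {H : Type*} [NormedAddCommGroup H] [InnerProductSpace ℂ H] [CompleteSpace H]
    (N : H →L[ℂ] H) (hN : N.IsPositive) (c γ : ℝ)
    (m : ℝ) (hm : 0 ≤ m)
    (hkey : ∀ u t : ℝ, 0 ≤ u → 0 ≤ t → (m*u)^2 ≤ (u + (c^2-γ^2)*t)^2 + (2*c*γ*t)^2)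
    (w : ℂ) (hwre : w.re = c^2-γ^2) (hwim : w.im^2 = (2*c*γ)^2)
    (x : H) : m * ‖x‖ ≤ ‖x + w • N x‖ := by
  rcases eq_or_ne x 0 with rfl | hx
  · simp
  have hx' : (0:ℝ) < ‖x‖ := norm_pos_iff.mpr hx
  set α : ℂ := inner ℂ x (N x) with hα
  have ht : 0 ≤ α.re := (Complex.nonneg_iff.mp (hN.inner_nonneg_right x)).1
  have him : α.im = 0 := by
    have h1 : (starRingEnd ℂ) α = α := by
      rw [hα, inner_conj_symm]
      exact hN.1 x x
    have := congrArg Complex.im h1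
    simp at this
    linarith
  have hβ : (inner ℂ x (x + w • N x) : ℂ) = ((‖x‖^2 : ℝ) : ℂ) + w * α := by
    rw [inner_add_right, inner_smul_right, ← hα, inner_self_eq_norm_sq_to_K]
    norm_cast
  have hre : (((‖x‖^2 : ℝ) : ℂ) + w * α).re = ‖x‖^2 + w.re * α.re := by
    simp [Complex.mul_re, him, ← Complex.ofReal_pow]
  have him2 : (((‖x‖^2 : ℝ) : ℂ) + w * α).im = w.im * α.re := by
    simp [Complex.mul_im, him, ← Complex.ofReal_pow]
  have hsq : (m * ‖x‖^2)^2 ≤ ‖(inner ℂ x (x + w • N x) : ℂ)‖^2 := by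
    rw [hβ, Complex.sq_norm, normSq_apply, hre, him2, hwre]
    have he : (w.im * α.re) * (w.im * α.re) = (2*c*γ*α.re)^2 := by
      have : (w.im * α.re) * (w.im * α.re) = w.im^2 * α.re^2 := by ring
      rw [this, hwim]; ring
    rw [he, show (‖x‖ ^ 2 + (c ^ 2 - γ ^ 2) * α.re) * (‖x‖ ^ 2 + (c ^ 2 - γ ^ 2) * α.re)
        = (‖x‖ ^ 2 + (c ^ 2 - γ ^ 2) * α.re)^2 by ring]
    exact hkey _ _ (by positivity) ht
  have h1 : m * ‖x‖^2 ≤ ‖(inner ℂ x (x + w • N x) : ℂ)‖ := by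
    nlinarith [norm_nonneg (inner ℂ x (x + w • N x) : ℂ), mul_nonneg hm (sq_nonneg ‖x‖)]
  have h2 : m * ‖x‖^2 ≤ ‖x‖ * ‖x + w • N x‖ :=
    h1.trans (norm_inner_le_norm (𝕜 := ℂ) x (x + w • N x))
  exact (mul_le_mul_iff_right₀ hx').mp
    (by rw [show ‖x‖ * (m * ‖x‖) = m * ‖x‖^2 by ring]; exact h2)

/-- For `z = c + iγ` with `c > 0`, and `N` a bounded nonnegative self-adjoint
operator on a complex Hilbert space, `1 + z²N` has a bounded inverse with
`‖(1+z²N)⁻¹‖ ≤ 1` if `|γ| ≤ c` and `‖(1+z²N)⁻¹‖ ≤ |z|²/(2c|γ|)` if `|γ| > c`. -/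
theorem inverse_one_add_zsq_N_bound
    {H : Type*} [NormedAddCommGroup H] [InnerProductSpace ℂ H] [CompleteSpace H]
    (N : H →L[ℂ] H) (hN : N.IsPositive)
    (c γ : ℝ) (hc : 0 < c) (z : ℂ) (hz : z = Complex.mk c γ) :
    ∃ B : H →L[ℂ] H,
      (1 + z ^ 2 • N) * B = 1 ∧ B * (1 + z ^ 2 • N) = 1 ∧
      ((|γ| ≤ c → ‖B‖ ≤ 1) ∧
       (c < |γ| → ‖B‖ ≤ ‖z‖ ^ 2 / (2 * c * |γ|))) := by
  have hzre : z.re = c := by rw [hz]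
  have hzim : z.im = γ := by rw [hz]
  set m : ℝ := if |γ| ≤ c then 1 else 2*c*|γ|/(c^2+γ^2) with hm_def
  have hm : 0 < m := by
    rw [hm_def]; split_ifs with h
    · norm_num
    · push_neg at h
      have : 0 < |γ| := hc.trans h
      positivity
  have hkey : ∀ u t : ℝ, 0 ≤ u → 0 ≤ t →
      (m*u)^2 ≤ (u + (c^2-γ^2)*t)^2 + (2*c*γ*t)^2 := by
    intro u t hu ht
    rw [hm_def]; split_ifs with h
    · exact keyineq c γ u t h hu ht
    · exact keyineq2 c γ u t hc (not_le.mp h) hu ht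
  set A : H →L[ℂ] H := 1 + z ^ 2 • N with hA_def
  set A' : H →L[ℂ] H := 1 + (starRingEnd ℂ z) ^ 2 • N with hA'_def
  have hw : (z^2).re = c^2 - γ^2 := by
    simp [pow_two, Complex.mul_re, hzre, hzim]; try ring
  have hwim : (z^2).im^2 = (2*c*γ)^2 := by
    simp [pow_two, Complex.mul_im, hzre, hzim]; try ring
  have hw' : ((starRingEnd ℂ z)^2).re = c^2 - γ^2 := by
    simp [pow_two, Complex.mul_re, hzre, hzim]; try ring
  have hw'im : ((starRingEnd ℂ z)^2).im^2 = (2*c*γ)^2 := by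
    simp [pow_two, Complex.mul_im, hzre, hzim]; try ring
  have hAx : ∀ x : H, A x = x + (z^2) • N x := by
    intro x; simp [hA_def]
  have hA'x : ∀ x : H, A' x = x + ((starRingEnd ℂ z)^2) • N x := by
    intro x; simp [hA'_def]
  have hcoer : ∀ x : H, m * ‖x‖ ≤ ‖A x‖ := by
    intro x; rw [hAx x]; exact coercive N hN c γ m hm.le hkey _ hw hwim x
  have hcoer' : ∀ x : H, m * ‖x‖ ≤ ‖A' x‖ := by
    intro x; rw [hA'x x]; exact coercive N hN c γ m hm.le hkey _ hw' hw'im x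
  -- adjoint of A is A'
  have hadj : ContinuousLinearMap.adjoint A = A' := by
    rw [hA_def, hA'_def, map_add, map_smulₛₗ, isSelfAdjoint_iff'.mp hN.isSelfAdjoint]
    rw [map_pow]
    congr 1
    simp [ContinuousLinearMap.one_def, ContinuousLinearMap.adjoint_id]
  -- x = 0 whenever A x = 0 (and same for A')
  have hzero : ∀ (T : H →L[ℂ] H), (∀ x : H, m * ‖x‖ ≤ ‖T x‖) → ∀ x, T x = 0 → x = 0 := by
    intro T hT x hx
    have := hT x
    rw [hx, norm_zero] at this
    have : ‖x‖ ≤ 0 := by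
      by_contra h
      push_neg at h
      nlinarith
    exact norm_le_zero_iff.mp this
  have hker : LinearMap.ker (A : H →ₗ[ℂ] H) = ⊥ := LinearMap.ker_eq_bot'.mpr fun x hx =>
    hzero A hcoer x hx
  -- closed range
  have hanti : AntilipschitzWith (⟨m⁻¹, by positivity⟩ : NNReal) A := by
    apply A.antilipschitz_of_bound
    intro x
    show ‖x‖ ≤ m⁻¹ * ‖A x‖
    rw [inv_mul_eq_div, le_div_iff₀ hm]
    linarith [hcoer x]
  have hclosed : IsClosed (LinearMap.range (A : H →ₗ[ℂ] H) : Set H) := by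
    rw [LinearMap.coe_range]; exact hanti.isClosed_range A.uniformContinuous
  -- dense range
  have hrange : LinearMap.range (A : H →ₗ[ℂ] H) = ⊤ := by
    haveI : CompleteSpace (LinearMap.range (A : H →ₗ[ℂ] H)) := hclosed.completeSpace_coe
    rw [← Submodule.orthogonal_eq_bot_iff]
    rw [Submodule.eq_bot_iff]
    intro y hy
    have hAy : A' y = 0 := by
      have h0 : ∀ x : H, (inner ℂ x (A' y) : ℂ) = 0 := by
        intro x
        rw [← hadj, ContinuousLinearMap.adjoint_inner_right]
        exact (Submodule.mem_orthogonal _ y).mp hy (A x) (LinearMap.mem_range_self _ x)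
      have := h0 (A' y)
      rwa [inner_self_eq_zero] at this
    exact hzero A' hcoer' y hAy
  set e : H ≃L[ℂ] H := ContinuousLinearEquiv.ofBijective A hker hrange with he_def
  have heA : ∀ x, e x = A x := fun x =>
    congrFun (ContinuousLinearEquiv.coeFn_ofBijective A hker hrange) x
  refine ⟨(e.symm : H →L[ℂ] H), ?_, ?_, ?_, ?_⟩
  · ext x
    rw [ContinuousLinearMap.mul_apply, ContinuousLinearMap.one_apply,
      ContinuousLinearEquiv.coe_coe, ← heA]
    exact e.apply_symm_apply x
  · ext x
    rw [ContinuousLinearMap.mul_apply, ContinuousLinearMap.one_apply,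
      ContinuousLinearEquiv.coe_coe, ← heA]
    exact e.symm_apply_apply x
  all_goals {
    have hB : ‖(e.symm : H →L[ℂ] H)‖ ≤ 1/m := by
      apply ContinuousLinearMap.opNorm_le_bound _ (by positivity)
      intro x
      simp only [ContinuousLinearEquiv.coe_coe]
      have h1 : m * ‖e.symm x‖ ≤ ‖A (e.symm x)‖ := hcoer _
      rw [← heA, e.apply_symm_apply] at h1
      rw [one_div, inv_mul_eq_div, le_div_iff₀ hm]
      linarith
    first
    | · intro h
        have : m = 1 := by rw [hm_def, if_pos h]
        rw [this] at hB
        simpa using hB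
    | · intro h
        have hmm : m = 2*c*|γ|/(c^2+γ^2) := by rw [hm_def, if_neg (not_le.mpr h)]
        have hnz : ‖z‖^2 = c^2 + γ^2 := by
          rw [Complex.sq_norm, normSq_apply, hzre, hzim]; ring
        rw [hnz]
        have hγ : 0 < |γ| := hc.trans h
        have : 1/m = (c^2+γ^2)/(2*c*|γ|) := by
          rw [hmm, one_div_div]
        rw [this] at hB
        exact hB
  }
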